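/- Assume that for all f, g, h ∈ A the function (s,t) ↦ Δ(f)(s,t)·g(s)·h(t) vanishes at infinity on X × X, and that the linear span of the set of all such functions {Δ(f)·(g ⊗ h) : f, g, h ∈ A} is dense in C₀(X × X, ℂ). Then there exists a continuous map m : X × X → X such that Δ(f)(s,t) = f(m(s,t)) for all f ∈ A and all s, t ∈ X. -/

import Mathlib

open scoped ZeroAtInfty BoundedContinuousFunction

open Filter Topology OnePoint

set_option linter.unusedSectionVars false
set_option linter.unusedVariables false

section CharAux

variable {X : Type*} [TopologicalSpace X] [LocallyCompactSpace X] [T2Space X]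

/-- Restriction of a continuous function on the one-point compactification,
renormalized to vanish at infinity. -/
noncomputable def resC0 (F : C(OnePoint X, ℂ)) : C₀(X, ℂ) where
  toFun x := F x - F ∞
  continuous_toFun := (F.continuous.comp OnePoint.continuous_coe).sub continuous_const
  zero_at_infty' := by
    have h : Tendsto (fun x : X => F x) (cocompact X) (𝓝 (F ∞)) := by
      have := (F.continuous.tendsto ∞).comp OnePoint.tendsto_coe_infty
      rwa [Filter.coclosedCompact_eq_cocompact] at this
    simpa using h.sub_const (F ∞)

@[simp] lemma resC0_apply (F : C(OnePoint X, ℂ)) (x : X) : resC0 F x = F x - F ∞ := rfl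

/-- Extension of a C₀ function to the one-point compactification, by `0` at `∞`. -/
noncomputable def extC (f : C₀(X, ℂ)) : C(OnePoint X, ℂ) where
  toFun z := z.elim 0 f
  continuous_toFun := by
    rw [OnePoint.continuous_iff]
    constructor
    · simpa [Filter.coclosedCompact_eq_cocompact] using f.zero_at_infty'
    · exact f.continuous

@[simp] lemma extC_coe (f : C₀(X, ℂ)) (x : X) : extC f (x : OnePoint X) = f x := rfl
@[simp] lemma extC_infty (f : C₀(X, ℂ)) : extC f ∞ = 0 := rfl

lemma resC0_extC (f : C₀(X, ℂ)) : resC0 (extC f) = f := by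
  ext x; simp

lemma resC0_one : resC0 (1 : C(OnePoint X, ℂ)) = 0 := by
  ext x; simp

lemma resC0_mul (F G : C(OnePoint X, ℂ)) :
    resC0 (F * G) = resC0 F * resC0 G + F ∞ • resC0 G + G ∞ • resC0 F := by
  ext x
  simp only [resC0_apply, ZeroAtInftyContinuousMap.coe_add, Pi.add_apply,
    ZeroAtInftyContinuousMap.coe_mul, Pi.mul_apply, ZeroAtInftyContinuousMap.coe_smul,
    Pi.smul_apply, smul_eq_mul, ContinuousMap.mul_apply]
  ring

lemma norm_resC0_le (F : C(OnePoint X, ℂ)) : ‖resC0 F‖ ≤ 2 * ‖F‖ := by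
  rw [← ZeroAtInftyContinuousMap.norm_toBCF_eq_norm]
  refine (BoundedContinuousFunction.norm_le (by positivity)).2 fun x => ?_
  calc ‖F x - F ∞‖ ≤ ‖F (x : OnePoint X)‖ + ‖F ∞‖ := norm_sub_le _ _
    _ ≤ ‖F‖ + ‖F‖ := add_le_add (F.norm_coe_le_norm _) (F.norm_coe_le_norm _)
    _ = 2 * ‖F‖ := by ring

/-- A nonzero character of `C₀(X, ℂ)` is evaluation at a point. -/
theorem char_exists_point (χ : C₀(X, ℂ) →⋆ₙₐ[ℂ] ℂ) (hχ : ∃ f, χ f ≠ 0) :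
    ∃ x : X, ∀ f : C₀(X, ℂ), χ f = f x := by
  obtain ⟨f₀, hf₀⟩ := hχ
  -- the extended character on `C(OnePoint X, ℂ)`
  let Φlin : C(OnePoint X, ℂ) →ₗ[ℂ] ℂ :=
    { toFun := fun F => F ∞ + χ (resC0 F)
      map_add' := fun F G => by
        have : resC0 (F + G) = resC0 F + resC0 G := by ext x; simp; ring
        simp [this, ContinuousMap.add_apply, map_add]; ring
      map_smul' := fun c F => by
        have : resC0 (c • F) = c • resC0 F := by ext x; simp [mul_sub]
        simp [this, ContinuousMap.smul_apply, _root_.map_smul, smul_eq_mul]; ring }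
  have hbound : ∀ F : C(OnePoint X, ℂ), ‖Φlin F‖ ≤ 3 * ‖F‖ := by
    intro F
    calc ‖F ∞ + χ (resC0 F)‖ ≤ ‖F ∞‖ + ‖χ (resC0 F)‖ := norm_add_le _ _
      _ ≤ ‖F‖ + ‖resC0 F‖ :=
        add_le_add (F.norm_coe_le_norm _) (NonUnitalStarAlgHom.norm_apply_le χ _)
      _ ≤ ‖F‖ + 2 * ‖F‖ := add_le_add le_rfl (norm_resC0_le F)
      _ = 3 * ‖F‖ := by ring
  let Φ : WeakDual ℂ C(OnePoint X, ℂ) := Φlin.mkContinuous 3 hbound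
  have hΦapp : ∀ F, Φ F = F ∞ + χ (resC0 F) := fun F => rfl
  have hΦmem : Φ ∈ WeakDual.characterSpace ℂ C(OnePoint X, ℂ) := by
    rw [WeakDual.CharacterSpace.eq_set_map_one_map_mul]
    constructor
    · simp [hΦapp, resC0_one, ContinuousMap.one_apply]
    · intro F G
      simp only [hΦapp, resC0_mul, map_add, map_mul, _root_.map_smul, smul_eq_mul,
        ContinuousMap.mul_apply]
      ring
  obtain ⟨z, hz⟩ :=
    (WeakDual.CharacterSpace.continuousMapEval_bijective (OnePoint X) ℂ).2 ⟨Φ, hΦmem⟩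
  have hz' : ∀ F : C(OnePoint X, ℂ), F z = F ∞ + χ (resC0 F) := by
    intro F
    have := DFunLike.congr_fun hz F
    rwa [WeakDual.CharacterSpace.continuousMapEval_apply_apply] at this
  have key : ∀ f : C₀(X, ℂ), (extC f) z = χ f := by
    intro f
    rw [hz' (extC f), extC_infty, resC0_extC, zero_add]
  cases z with
  | infty => exact absurd ((key f₀).symm.trans (extC_infty f₀)) hf₀
  | coe x => exact ⟨x, fun f => (key f).symm⟩

end CharAux

/-- Evaluation at a point as a non-unital star algebra homomorphism on bounded
continuous functions. -/
noncomputable def evalSH {Y : Type*} [TopologicalSpace Y] (p : Y) : (Y →ᵇ ℂ) →⋆ₙₐ[ℂ] ℂ where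
  toFun F := F p
  map_smul' _ _ := rfl
  map_zero' := rfl
  map_add' _ _ := rfl
  map_mul' _ _ := rfl
  map_star' _ := rfl

/-- A compactly supported real continuous function, as an element of `C₀(Y, ℂ)`. -/
noncomputable def c0OfCS {Y : Type*} [TopologicalSpace Y] (g : C(Y, ℝ))
    (hg : HasCompactSupport g) : C₀(Y, ℂ) where
  toFun y := (g y : ℂ)
  continuous_toFun := Complex.continuous_ofReal.comp g.continuous
  zero_at_infty' := by
    refine tendsto_const_nhds.congr' ?_
    have hmem : (tsupport g)ᶜ ∈ cocompact Y :=
      mem_cocompact.2 ⟨tsupport g, hg, le_rfl⟩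
    filter_upwards [hmem] with y hy
    simp [image_eq_zero_of_notMem_tsupport hy]

@[simp] lemma c0OfCS_apply {Y : Type*} [TopologicalSpace Y] (g : C(Y, ℝ))
    (hg : HasCompactSupport g) (y : Y) : c0OfCS g hg y = (g y : ℂ) := rfl

/-- Paper's Proposition 1.1: in the abelian case `A = C₀(X)`, non-degeneracy of the
comultiplication `Δ` (density of the span of `Δ(A)(A ⊗ A)` in `C₀(X × X)`) produces a
continuous product on `X` with `Δ(f)(s,t) = f(st)`. -/
theorem stmt3 {X : Type*} [TopologicalSpace X] [LocallyCompactSpace X] [T2Space X]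
    (Δ : C₀(X, ℂ) →⋆ₙₐ[ℂ] ((X × X) →ᵇ ℂ))
    (hvan : ∀ f g h : C₀(X, ℂ),
      Filter.Tendsto (fun p : X × X => Δ f p * g p.1 * h p.2)
        (Filter.cocompact (X × X)) (nhds 0))
    (hdense : Dense
      ((Submodule.span ℂ {u : C₀(X × X, ℂ) | ∃ f g h : C₀(X, ℂ),
          ∀ p : X × X, u p = Δ f p * g p.1 * h p.2} : Submodule ℂ C₀(X × X, ℂ)) :
        Set C₀(X × X, ℂ))) :
    ∃ m : X × X → X, Continuous m ∧
      ∀ (f : C₀(X, ℂ)) (s t : X), Δ f (s, t) = f (m (s, t)) := by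
  have hnz : ∀ p : X × X, ∃ f : C₀(X, ℂ), Δ f p ≠ 0 := by
    intro p
    by_contra hcon
    push_neg at hcon
    -- every element of C₀(X × X, ℂ) vanishes at p
    have hall : ∀ u : C₀(X × X, ℂ), u p = 0 := by
      let evalL : C₀(X × X, ℂ) →ₗ[ℂ] ℂ :=
        { toFun := fun u => u p, map_add' := fun u v => rfl, map_smul' := fun c u => rfl }
      have hcont : Continuous fun u : C₀(X × X, ℂ) => u p := by
        have h1 : Continuous fun u : C₀(X × X, ℂ) => u.toBCF :=
          (ZeroAtInftyContinuousMap.isometry_toBCF).continuous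
        exact (continuous_eval_const (F := (X × X) →ᵇ ℂ) p).comp h1
      have hclosed : IsClosed {u : C₀(X × X, ℂ) | u p = 0} :=
        isClosed_eq hcont continuous_const
      have hsub : ((Submodule.span ℂ {u : C₀(X × X, ℂ) | ∃ f g h : C₀(X, ℂ),
          ∀ q : X × X, u q = Δ f q * g q.1 * h q.2} : Submodule ℂ C₀(X × X, ℂ)) : Set _)
          ⊆ {u : C₀(X × X, ℂ) | u p = 0} := by
        have : {u : C₀(X × X, ℂ) | ∃ f g h : C₀(X, ℂ),
            ∀ q : X × X, u q = Δ f q * g q.1 * h q.2} ⊆ (LinearMap.ker evalL : Set _) := by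
          rintro u ⟨f, g, h, hu⟩
          simp only [SetLike.mem_coe, LinearMap.mem_ker]
          show u p = 0
          rw [hu p, hcon f, zero_mul, zero_mul]
        intro u hu
        exact (Submodule.span_le.2 this) hu
      have := closure_minimal hsub hclosed
      rw [hdense.closure_eq] at this
      exact fun u => this (Set.mem_univ u)
    obtain ⟨g, hg1, hg0, hgc, hgI⟩ := exists_continuous_one_zero_of_isCompact
      (isCompact_singleton : IsCompact {p}) isClosed_empty (Set.disjoint_empty _)
    have h1 := hall (c0OfCS g hgc)
    rw [c0OfCS_apply, hg1 rfl] at h1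
    simp at h1
  have spec : ∀ p : X × X, ∃ x : X, ∀ f : C₀(X, ℂ), Δ f p = f x := by
    intro p
    obtain ⟨f₀, hf₀⟩ := hnz p
    obtain ⟨x, hx⟩ := char_exists_point ((evalSH p).comp Δ) ⟨f₀, hf₀⟩
    exact ⟨x, fun f => hx f⟩
  choose m hm using spec
  refine ⟨m, ?_, fun f s t => hm (s, t) f⟩
  refine continuous_iff_continuousAt.2 fun p => ?_
  rw [ContinuousAt, Filter.tendsto_def]
  intro U hU
  obtain ⟨V, hVU, hVopen, hpV⟩ := mem_nhds_iff.1 hU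
  obtain ⟨g, hg1, hg0, hgc, -⟩ := exists_continuous_one_zero_of_isCompact
    (isCompact_singleton : IsCompact {m p}) hVopen.isClosed_compl
    (Set.disjoint_singleton_left.2 (by simpa using hpV))
  set f := c0OfCS g hgc with hf
  have hfp : Δ f p = 1 := by
    rw [hm p f, c0OfCS_apply, hg1 rfl]; simp
  have hopen : IsOpen {q : X × X | Δ f q ≠ 0} :=
    isOpen_ne.preimage (Δ f).continuous
  refine Filter.mem_of_superset (hopen.mem_nhds (by simp [hfp])) ?_
  intro q hq
  have h2 : f (m q) ≠ 0 := by rw [← hm q f]; exact hq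
  have h3 : g (m q) ≠ 0 := by
    simpa [hf, Complex.ofReal_eq_zero] using h2
  have h4 : m q ∈ V := by
    by_contra hmem
    exact h3 (hg0 hmem)
  exact hVU h4
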